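/- (Hoeffding–Azuma MGF bound) Let (ξ_n)_{n≥1} be a sequence of martingale differences with respect to a filtration (F_n) (i.e., ξ_n is F_n-measurable and E[ξ_n | F_{n−1}] = 0 a.s.) and suppose |ξ_n| ≤ d_n almost surely for positive constants d_n. Then for every natural number n and every λ ∈ ℝ, E exp(λ ∑_{i=1}^n ξ_i) ≤ exp(λ² ∑_{i=1}^n d_i² / 2); equivalently, τ_{φ_2}(∑_{i=1}^n ξ_i) ≤ (∑_{i=1}^n d_i²)^{1/2}. -/

import Mathlib

open MeasureTheory Real

/-- `φ_2(x) = x²/2`. -/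
noncomputable def phi2 (x : ℝ) : ℝ := x ^ 2 / 2

/-- The set of admissible constants in the definition of the `φ`-subgaussian standard:
`{a ≥ 0 : ∀ λ, ln E exp(λξ) ≤ φ(aλ)}` (the exponentiated form of the inequality also
encodes finiteness of `E exp(λξ)`). -/
def subSet {Ω : Type*} [MeasurableSpace Ω] (μ : Measure Ω) (φ : ℝ → ℝ) (ξ : Ω → ℝ) :
    Set ℝ :=
  {a | 0 ≤ a ∧ ∀ l : ℝ,
    ∫⁻ ω, ENNReal.ofReal (Real.exp (l * ξ ω)) ∂μ ≤ ENNReal.ofReal (Real.exp (φ (a * l)))}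

/-- The `φ`-subgaussian standard (norm) `τ_φ(ξ)`. -/
noncomputable def tau {Ω : Type*} [MeasurableSpace Ω] (μ : Measure Ω) (φ : ℝ → ℝ)
    (ξ : Ω → ℝ) : ℝ :=
  sInf (subSet μ φ ξ)

lemma exp_le_cosh_add (t x D : ℝ) (hD : 0 < D) (hx : |x| ≤ D) :
    Real.exp (t * x) ≤ Real.cosh (t * D) + (x / D) * Real.sinh (t * D) := by
  have habs := abs_le.mp hx
  have ha : (0:ℝ) ≤ (D + x) / (2 * D) := by
    apply div_nonneg <;> linarith
  have hb : (0:ℝ) ≤ (D - x) / (2 * D) := by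
    apply div_nonneg <;> linarith
  have hab : (D + x) / (2 * D) + (D - x) / (2 * D) = 1 := by
    field_simp
    ring
  have h := convexOn_exp.2 (Set.mem_univ (t * D)) (Set.mem_univ (-(t * D))) ha hb hab
  simp only [smul_eq_mul] at h
  have harg : (D + x) / (2 * D) * (t * D) + (D - x) / (2 * D) * -(t * D) = t * x := by
    field_simp; ring
  rw [harg] at h
  refine h.trans (le_of_eq ?_)
  rw [Real.cosh_eq, Real.sinh_eq]
  field_simp
  ring

/-- Hoeffding–Azuma MGF bound: if `(ξ_n)` is a sequence of martingale differences with
respect to a filtration `(F_n)` with `|ξ_n| ≤ d_n` a.s., then for every `n` and `λ`,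
`E exp(λ ∑_{i=1}^n ξ_i) ≤ exp(λ² ∑_{i=1}^n d_i²/2)` (stated in exponentiated/lintegral
form); equivalently, `τ_{φ_2}(∑_{i=1}^n ξ_i) ≤ (∑_{i=1}^n d_i²)^{1/2}`. -/
theorem hoeffding_azuma_mgf_bound
    {Ω : Type*} {m0 : MeasurableSpace Ω} (μ : Measure Ω) [IsProbabilityMeasure μ]
    (ℱ : Filtration ℕ m0)
    (ξ : ℕ → Ω → ℝ)
    (hadp : ∀ n : ℕ, 1 ≤ n → StronglyMeasurable[ℱ n] (ξ n))
    (hint : ∀ n : ℕ, Integrable (ξ n) μ)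
    (hmd : ∀ n : ℕ, 1 ≤ n → μ[ξ n | ℱ (n - 1)] =ᵐ[μ] 0)
    (d : ℕ → ℝ) (hd : ∀ n, 0 < d n)
    (hbdd : ∀ n : ℕ, 1 ≤ n → ∀ᵐ ω ∂μ, |ξ n ω| ≤ d n) :
    ∀ n : ℕ, 1 ≤ n →
      (∀ l : ℝ,
        ∫⁻ ω, ENNReal.ofReal (Real.exp (l * ∑ i ∈ Finset.Icc 1 n, ξ i ω)) ∂μ ≤
          ENNReal.ofReal (Real.exp (l ^ 2 * (∑ i ∈ Finset.Icc 1 n, d i ^ 2) / 2))) ∧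
      tau μ phi2 (fun ω => ∑ i ∈ Finset.Icc 1 n, ξ i ω) ≤
        Real.sqrt (∑ i ∈ Finset.Icc 1 n, d i ^ 2) := by
  -- strong measurability of partial sums
  have hSmeas : ∀ n : ℕ, StronglyMeasurable[ℱ n] (fun ω => ∑ i ∈ Finset.Icc 1 n, ξ i ω) := by
    intro n
    apply Finset.stronglyMeasurable_fun_sum
    intro i hi
    exact (hadp i (Finset.mem_Icc.mp hi).1).mono (ℱ.mono (Finset.mem_Icc.mp hi).2)
  -- a.e. bound on partial sums
  have hSbdd : ∀ n : ℕ, ∀ᵐ ω ∂μ, |∑ i ∈ Finset.Icc 1 n, ξ i ω| ≤ ∑ i ∈ Finset.Icc 1 n, d i := by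
    intro n
    have h : ∀ᵐ ω ∂μ, ∀ i ∈ Finset.Icc 1 n, |ξ i ω| ≤ d i := by
      rw [Finset.eventually_all]
      intro i hi
      exact hbdd i (Finset.mem_Icc.mp hi).1
    filter_upwards [h] with ω hω
    exact (Finset.abs_sum_le_sum_abs _ _).trans (Finset.sum_le_sum hω)
  -- the main inductive claim, in Bochner-integral form
  have key : ∀ n : ℕ, ∀ l : ℝ,
      Integrable (fun ω => Real.exp (l * ∑ i ∈ Finset.Icc 1 n, ξ i ω)) μ ∧
      ∫ ω, Real.exp (l * ∑ i ∈ Finset.Icc 1 n, ξ i ω) ∂μ ≤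
        Real.exp (l ^ 2 * (∑ i ∈ Finset.Icc 1 n, d i ^ 2) / 2) := by
    intro n
    induction n with
    | zero =>
      intro l
      simp
    | succ n ih =>
      intro l
      obtain ⟨hIf, hIval⟩ := ih l
      set S : Ω → ℝ := fun ω => ∑ i ∈ Finset.Icc 1 n, ξ i ω with hS
      set f : Ω → ℝ := fun ω => Real.exp (l * S ω) with hf
      set g : Ω → ℝ := ξ (n + 1) with hg
      set D : ℝ := d (n + 1) with hDdef
      have hsum : ∀ ω, ∑ i ∈ Finset.Icc 1 (n + 1), ξ i ω = S ω + g ω := by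
        intro ω
        exact Finset.sum_Icc_succ_top (Nat.one_le_iff_ne_zero.mpr (Nat.succ_ne_zero n)) _
      have hdsum : ∑ i ∈ Finset.Icc 1 (n + 1), d i ^ 2
          = (∑ i ∈ Finset.Icc 1 n, d i ^ 2) + D ^ 2 :=
        Finset.sum_Icc_succ_top (Nat.one_le_iff_ne_zero.mpr (Nat.succ_ne_zero n)) _
      have hexp : ∀ ω, Real.exp (l * ∑ i ∈ Finset.Icc 1 (n + 1), ξ i ω)
          = f ω * Real.exp (l * g ω) := by
        intro ω
        rw [hsum, mul_add, Real.exp_add]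
      -- measurability and bounds for f
      have hfmeas : StronglyMeasurable[ℱ n] f :=
        Real.continuous_exp.comp_stronglyMeasurable ((hSmeas n).const_mul l)
      have hfmeas0 : AEStronglyMeasurable f μ := (hfmeas.mono (ℱ.le n)).aestronglyMeasurable
      set C : ℝ := Real.exp (|l| * ∑ i ∈ Finset.Icc 1 n, d i) with hC
      have hfbd : ∀ᵐ ω ∂μ, ‖f ω‖ ≤ C := by
        filter_upwards [hSbdd n] with ω hω
        rw [Real.norm_eq_abs, abs_of_pos (Real.exp_pos _)]
        apply Real.exp_le_exp.mpr
        calc l * S ω ≤ |l * S ω| := le_abs_self _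
          _ = |l| * |S ω| := abs_mul _ _
          _ ≤ |l| * ∑ i ∈ Finset.Icc 1 n, d i :=
            mul_le_mul_of_nonneg_left hω (abs_nonneg l)
      -- integrability
      have hintg : Integrable g μ := hint (n + 1)
      have hfgint : Integrable (fun ω => f ω * g ω) μ := by
        have := hintg.bdd_mul hfmeas0 hfbd
        simpa [Pi.mul_apply] using this
      -- E[f * g] = 0
      haveI : SigmaFinite (μ.trim (ℱ.le n)) := by infer_instance
      have hcond : μ[f * g | ℱ n] =ᵐ[μ] f * μ[g | ℱ n] :=
        condExp_stronglyMeasurable_mul_of_bound (ℱ.le n) hfmeas hintg C hfbd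
      have hgcond : μ[g | ℱ n] =ᵐ[μ] 0 := by
        have := hmd (n + 1) (Nat.one_le_iff_ne_zero.mpr (Nat.succ_ne_zero n))
        simpa using this
      have hfg0 : ∫ ω, f ω * g ω ∂μ = 0 := by
        have h1 : ∫ ω, f ω * g ω ∂μ = ∫ ω, (μ[f * g | ℱ n]) ω ∂μ :=
          (integral_condExp (ℱ.le n)).symm
        rw [h1]
        have h2 : μ[f * g | ℱ n] =ᵐ[μ] 0 := by
          refine hcond.trans ?_
          filter_upwards [hgcond] with ω hω
          simp [Pi.mul_apply, hω]
        rw [integral_congr_ae h2]; simp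
      -- pointwise bound
      have hpt : ∀ᵐ ω ∂μ, f ω * Real.exp (l * g ω) ≤
          Real.cosh (l * D) * f ω + (Real.sinh (l * D) / D) * (f ω * g ω) := by
        filter_upwards [hbdd (n + 1) (Nat.one_le_iff_ne_zero.mpr (Nat.succ_ne_zero n))] with ω hω
        have h1 := exp_le_cosh_add l (g ω) D (hd (n + 1)) hω
        have h2 := mul_le_mul_of_nonneg_left h1 (le_of_lt (Real.exp_pos (l * S ω)))
        calc f ω * Real.exp (l * g ω)
            ≤ f ω * (Real.cosh (l * D) + g ω / D * Real.sinh (l * D)) := h2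
          _ = Real.cosh (l * D) * f ω + (Real.sinh (l * D) / D) * (f ω * g ω) := by
              field_simp
      -- integrability of LHS and RHS
      have hLmeas : AEStronglyMeasurable (fun ω => f ω * Real.exp (l * g ω)) μ := by
        have : AEStronglyMeasurable (fun ω => Real.exp (l * g ω)) μ :=
          (Real.continuous_exp.comp_stronglyMeasurable
            (((hadp (n+1) (Nat.one_le_iff_ne_zero.mpr (Nat.succ_ne_zero n))).mono
              (ℱ.le (n+1))).const_mul l)).aestronglyMeasurable
        exact hfmeas0.mul this
      have hLint : Integrable (fun ω => f ω * Real.exp (l * g ω)) μ := by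
        refine (integrable_const (C * Real.exp (|l| * D))).mono' hLmeas ?_
        filter_upwards [hfbd, hbdd (n + 1) (Nat.one_le_iff_ne_zero.mpr (Nat.succ_ne_zero n))]
          with ω h1 h2
        rw [norm_mul]
        apply mul_le_mul h1 _ (norm_nonneg _) ((norm_nonneg _).trans h1)
        rw [Real.norm_eq_abs, abs_of_pos (Real.exp_pos _)]
        apply Real.exp_le_exp.mpr
        calc l * g ω ≤ |l * g ω| := le_abs_self _
          _ = |l| * |g ω| := abs_mul _ _
          _ ≤ |l| * D := mul_le_mul_of_nonneg_left h2 (abs_nonneg l)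
      have hRint : Integrable (fun ω =>
          Real.cosh (l * D) * f ω + (Real.sinh (l * D) / D) * (f ω * g ω)) μ :=
        (hIf.const_mul _).add (hfgint.const_mul _)
      -- put it together
      have hIf' : Integrable (fun ω => Real.exp (l * ∑ i ∈ Finset.Icc 1 (n + 1), ξ i ω)) μ := by
        simpa only [hexp] using hLint
      refine ⟨hIf', ?_⟩
      have step1 : ∫ ω, Real.exp (l * ∑ i ∈ Finset.Icc 1 (n + 1), ξ i ω) ∂μ
          = ∫ ω, f ω * Real.exp (l * g ω) ∂μ := by
        simp only [hexp]
      rw [step1]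
      have step2 : ∫ ω, f ω * Real.exp (l * g ω) ∂μ ≤
          ∫ ω, (Real.cosh (l * D) * f ω + (Real.sinh (l * D) / D) * (f ω * g ω)) ∂μ :=
        integral_mono_ae hLint hRint hpt
      have step3 : ∫ ω, (Real.cosh (l * D) * f ω + (Real.sinh (l * D) / D) * (f ω * g ω)) ∂μ
          = Real.cosh (l * D) * ∫ ω, f ω ∂μ := by
        rw [integral_add (hIf.const_mul _) (hfgint.const_mul _), integral_const_mul,
          integral_const_mul, hfg0, mul_zero, add_zero]
      have hfpos : 0 ≤ ∫ ω, f ω ∂μ := integral_nonneg fun ω => le_of_lt (Real.exp_pos _)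
      have step4 : Real.cosh (l * D) * ∫ ω, f ω ∂μ ≤
          Real.exp ((l * D) ^ 2 / 2) * Real.exp (l ^ 2 * (∑ i ∈ Finset.Icc 1 n, d i ^ 2) / 2) :=
        mul_le_mul (Real.cosh_le_exp_half_sq _) hIval hfpos (le_of_lt (Real.exp_pos _))
      calc ∫ ω, f ω * Real.exp (l * g ω) ∂μ
          ≤ Real.exp ((l * D) ^ 2 / 2) *
            Real.exp (l ^ 2 * (∑ i ∈ Finset.Icc 1 n, d i ^ 2) / 2) := by
            rw [step3] at step2; exact step2.trans step4
        _ = Real.exp (l ^ 2 * (∑ i ∈ Finset.Icc 1 (n + 1), d i ^ 2) / 2) := by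
            rw [← Real.exp_add, hdsum]; ring_nf
  -- conclude
  intro n hn
  have hmgf : ∀ l : ℝ,
      ∫⁻ ω, ENNReal.ofReal (Real.exp (l * ∑ i ∈ Finset.Icc 1 n, ξ i ω)) ∂μ ≤
        ENNReal.ofReal (Real.exp (l ^ 2 * (∑ i ∈ Finset.Icc 1 n, d i ^ 2) / 2)) := by
    intro l
    obtain ⟨hI, hv⟩ := key n l
    rw [← ofReal_integral_eq_lintegral_ofReal hI
      (Filter.Eventually.of_forall fun ω => le_of_lt (Real.exp_pos _))]
    exact ENNReal.ofReal_le_ofReal hv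
  refine ⟨hmgf, ?_⟩
  have hDnn : (0:ℝ) ≤ ∑ i ∈ Finset.Icc 1 n, d i ^ 2 :=
    Finset.sum_nonneg fun i _ => sq_nonneg _
  apply csInf_le
  · exact ⟨0, fun a ha => ha.1⟩
  · refine ⟨Real.sqrt_nonneg _, fun l => ?_⟩
    have : phi2 (Real.sqrt (∑ i ∈ Finset.Icc 1 n, d i ^ 2) * l)
        = l ^ 2 * (∑ i ∈ Finset.Icc 1 n, d i ^ 2) / 2 := by
      rw [phi2, mul_pow, Real.sq_sqrt hDnn]; ring
    rw [this]
    exact hmgf l
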